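/- In the network model, let P_T > 0 and call a beamformer collection V power-feasible if ∑_{f ∈ 𝓕} ∑_{k : β k = b} ‖V k f‖² ≤ |𝓕|·P_T for every b ∈ 𝓑, and call a scheduling variable U admissible if U k f ∈ {0,1} for all k, f and ∑_{k : β k = b} U k f ≤ M for every b ∈ 𝓑 and f ∈ 𝓕. Suppose: (i) U⁰ is admissible and V⁰ is power-feasible; (ii) Γ¹ satisfies Γ¹ k f > −1 for all k, f and f_r(U⁰, V⁰, Γ¹) ≥ f_r(U⁰, V⁰, Γ) for every Γ with Γ k f > −1 for all k, f; (iii) Y¹ satisfies f_q(U⁰, V⁰, Γ¹, Y¹) ≥ f_q(U⁰, V⁰, Γ¹, Y) for every Y : 𝓚 → 𝓕 → ℂ; (iv) V¹ is power-feasible and f_q(U⁰, V¹, Γ¹, Y¹) ≥ f_q(U⁰, V, Γ¹, Y¹) for every power-feasible V; and (v) U¹ is admissible, Ṽ¹ is power-feasible, and f_q(U¹, Ṽ¹, Γ¹, Y¹) ≥ f_q(U⁰, V¹, Γ¹, Y¹). Then f_0(U⁰, V⁰) ≤ f_0(U¹, Ṽ¹); i.e., one iteration of the algorithm does not decrease the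 weighted-sum-rate objective. -/

import Mathlib

open scoped BigOperators

variable {𝓑 𝓕 𝓚 : Type*}

/-- Signal power `S_{k,f}(U,V) = U k f · |⟪h k (β k) f, V k f⟫|²`. -/
noncomputable def sigPow {M : ℕ} (β : 𝓚 → 𝓑)
    (h : 𝓚 → 𝓑 → 𝓕 → EuclideanSpace ℂ (Fin M))
    (U : 𝓚 → 𝓕 → ℝ) (V : 𝓚 → 𝓕 → EuclideanSpace ℂ (Fin M)) (k : 𝓚) (f : 𝓕) : ℝ :=
  U k f * ‖(inner ℂ (h k (β k) f) (V k f) : ℂ)‖ ^ 2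

/-- Interference-plus-noise power
`I_{k,f}(U,V) = ∑_{k' ≠ k} U k' f · |⟪h k (β k') f, V k' f⟫|² + (σ k f)²`. -/
noncomputable def intPow {M : ℕ} [Fintype 𝓚] [DecidableEq 𝓚] (β : 𝓚 → 𝓑)
    (h : 𝓚 → 𝓑 → 𝓕 → EuclideanSpace ℂ (Fin M)) (σ : 𝓚 → 𝓕 → ℝ)
    (U : 𝓚 → 𝓕 → ℝ) (V : 𝓚 → 𝓕 → EuclideanSpace ℂ (Fin M)) (k : 𝓚) (f : 𝓕) : ℝ :=
  (∑ k' ∈ Finset.univ.erase k,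
      U k' f * ‖(inner ℂ (h k (β k') f) (V k' f) : ℂ)‖ ^ 2) + (σ k f) ^ 2

/-- SINR `γ_{k,f}(U,V) = S_{k,f}(U,V) / I_{k,f}(U,V)`. -/
noncomputable def sinr {M : ℕ} [Fintype 𝓚] [DecidableEq 𝓚] (β : 𝓚 → 𝓑)
    (h : 𝓚 → 𝓑 → 𝓕 → EuclideanSpace ℂ (Fin M)) (σ : 𝓚 → 𝓕 → ℝ)
    (U : 𝓚 → 𝓕 → ℝ) (V : 𝓚 → 𝓕 → EuclideanSpace ℂ (Fin M)) (k : 𝓚) (f : 𝓕) : ℝ :=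
  sigPow β h U V k f / intPow β h σ U V k f

/-- Weighted sum rate `f₀(U,V) = ∑_{k,f} w k · log(1 + γ_{k,f}(U,V))`. -/
noncomputable def f0 {M : ℕ} [Fintype 𝓚] [DecidableEq 𝓚] [Fintype 𝓕] (β : 𝓚 → 𝓑)
    (h : 𝓚 → 𝓑 → 𝓕 → EuclideanSpace ℂ (Fin M)) (w : 𝓚 → ℝ) (σ : 𝓚 → 𝓕 → ℝ)
    (U : 𝓚 → 𝓕 → ℝ) (V : 𝓚 → 𝓕 → EuclideanSpace ℂ (Fin M)) : ℝ :=
  ∑ k, ∑ f, w k * Real.log (1 + sinr β h σ U V k f)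

/-- Lagrangian-dual-transform objective `f_r(U,V,Γ)`. -/
noncomputable def fr {M : ℕ} [Fintype 𝓚] [DecidableEq 𝓚] [Fintype 𝓕] (β : 𝓚 → 𝓑)
    (h : 𝓚 → 𝓑 → 𝓕 → EuclideanSpace ℂ (Fin M)) (w : 𝓚 → ℝ) (σ : 𝓚 → 𝓕 → ℝ)
    (U : 𝓚 → 𝓕 → ℝ) (V : 𝓚 → 𝓕 → EuclideanSpace ℂ (Fin M)) (Γ : 𝓚 → 𝓕 → ℝ) : ℝ :=
  ∑ k, ∑ f,
    (w k * Real.log (1 + Γ k f) - w k * Γ k f +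
      w k * (1 + Γ k f) * sigPow β h U V k f /
        (sigPow β h U V k f + intPow β h σ U V k f))

/-- Quadratic-transform objective `f_q(U,V,Γ,Y)`. -/
noncomputable def fq {M : ℕ} [Fintype 𝓚] [DecidableEq 𝓚] [Fintype 𝓕] (β : 𝓚 → 𝓑)
    (h : 𝓚 → 𝓑 → 𝓕 → EuclideanSpace ℂ (Fin M)) (w : 𝓚 → ℝ) (σ : 𝓚 → 𝓕 → ℝ)
    (U : 𝓚 → 𝓕 → ℝ) (V : 𝓚 → 𝓕 → EuclideanSpace ℂ (Fin M)) (Γ : 𝓚 → 𝓕 → ℝ)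
    (Y : 𝓚 → 𝓕 → ℂ) : ℝ :=
  ∑ k, ∑ f,
    (w k * (Real.log (1 + Γ k f) - Γ k f) +
      2 * ((starRingEnd ℂ) (Y k f) *
        (((Real.sqrt (w k * (1 + Γ k f)) * U k f : ℝ) : ℂ) *
          (inner ℂ (V k f) (h k (β k) f) : ℂ))).re -
      ‖Y k f‖ ^ 2 * (sigPow β h U V k f + intPow β h σ U V k f))


section Helpers

variable {𝓑 𝓕 𝓚 : Type*}

private lemma quad_le' (a y : ℂ) (d : ℝ) (hd : 0 < d) :
    2 * ((starRingEnd ℂ) y * a).re - ‖y‖ ^ 2 * d ≤ ‖a‖ ^ 2 / d := by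
  rw [le_div_iff₀ hd, Complex.sq_norm, Complex.sq_norm]
  have h1 := sq_nonneg (a.re - y.re * d)
  have h2 := sq_nonneg (a.im - y.im * d)
  simp only [Complex.normSq_apply, Complex.mul_re, Complex.conj_re, Complex.conj_im]
  nlinarith

private lemma quad_eq' (a : ℂ) (d : ℝ) (hd : 0 < d) :
    2 * ((starRingEnd ℂ) (a / (d : ℂ)) * a).re - ‖a / (d : ℂ)‖ ^ 2 * d
      = ‖a‖ ^ 2 / d := by
  have hd0 : d ≠ 0 := ne_of_gt hd
  rw [Complex.sq_norm, Complex.sq_norm, Complex.normSq_div, map_div₀, Complex.conj_ofReal,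
    div_mul_eq_mul_div, Complex.div_ofReal_re, Complex.normSq_ofReal]
  simp only [Complex.normSq_apply, Complex.mul_re, Complex.conj_re, Complex.conj_im]
  field_simp
  ring

private lemma dual_le' (S I Γ : ℝ) (hS : 0 ≤ S) (hI : 0 < I) (hΓ : -1 < Γ) :
    Real.log (1 + Γ) - Γ + (1 + Γ) * S / (S + I) ≤ Real.log (1 + S / I) := by
  have h1 : (0:ℝ) < 1 + Γ := by linarith
  have hSI : (0:ℝ) < S + I := by linarith
  have hγ : (0:ℝ) < 1 + S / I := by positivity
  have key := Real.log_le_sub_one_of_pos (div_pos h1 hγ)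
  rw [Real.log_div (ne_of_gt h1) (ne_of_gt hγ)] at key
  have e1 : (1 + Γ) / (1 + S / I) = (1 + Γ) * I / (S + I) := by field_simp; ring
  have e2 : (1 + Γ) * S / (S + I) + (1 + Γ) * I / (S + I) = 1 + Γ := by field_simp
  rw [e1] at key
  linarith

private lemma dual_id' (S I : ℝ) (hS : 0 ≤ S) (hI : 0 < I) :
    (1 + S / I) * S / (S + I) = S / I := by
  have hSI : (0:ℝ) < S + I := by linarith
  field_simp
  ring

private lemma absa' (wk Γ U : ℝ) (hwΓ : 0 ≤ wk * (1 + Γ)) (hU : U = 0 ∨ U = 1) (z : ℂ) :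
    ‖(((Real.sqrt (wk * (1 + Γ)) * U : ℝ) : ℂ) * z)‖ ^ 2
      = wk * (1 + Γ) * (U * ‖z‖ ^ 2) := by
  rw [norm_mul, mul_pow, Complex.norm_real, Real.norm_eq_abs, sq_abs, mul_pow, Real.sq_sqrt hwΓ]
  rcases hU with h | h <;> rw [h] <;> ring

private lemma sigPow_nonneg' {M : ℕ} (β : 𝓚 → 𝓑)
    (h : 𝓚 → 𝓑 → 𝓕 → EuclideanSpace ℂ (Fin M)) (U : 𝓚 → 𝓕 → ℝ)
    (V : 𝓚 → 𝓕 → EuclideanSpace ℂ (Fin M)) (hU : ∀ k f, 0 ≤ U k f) (k : 𝓚) (f : 𝓕) :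
    0 ≤ sigPow β h U V k f :=
  mul_nonneg (hU k f) (sq_nonneg _)

private lemma intPow_pos' {M : ℕ} [Fintype 𝓚] [DecidableEq 𝓚] (β : 𝓚 → 𝓑)
    (h : 𝓚 → 𝓑 → 𝓕 → EuclideanSpace ℂ (Fin M)) (σ : 𝓚 → 𝓕 → ℝ) (hσ : ∀ k f, 0 < σ k f)
    (U : 𝓚 → 𝓕 → ℝ) (V : 𝓚 → 𝓕 → EuclideanSpace ℂ (Fin M))
    (hU : ∀ k f, 0 ≤ U k f) (k : 𝓚) (f : 𝓕) :
    0 < intPow β h σ U V k f :=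
  add_pos_of_nonneg_of_pos
    (Finset.sum_nonneg fun k' _ => mul_nonneg (hU k' f) (sq_nonneg _))
    (pow_pos (hσ k f) 2)

private lemma abs_inner_symm' {M : ℕ} (x y : EuclideanSpace ℂ (Fin M)) :
    ‖(inner ℂ x y : ℂ)‖ = ‖(inner ℂ y x : ℂ)‖ := by
  rw [show (inner ℂ x y : ℂ) = (starRingEnd ℂ) (inner ℂ y x : ℂ) from (inner_conj_symm x y).symm]
  exact Complex.norm_conj _

private lemma f0_eq_fr' {M : ℕ} [Fintype 𝓚] [DecidableEq 𝓚] [Fintype 𝓕] (β : 𝓚 → 𝓑)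
    (h : 𝓚 → 𝓑 → 𝓕 → EuclideanSpace ℂ (Fin M)) (w : 𝓚 → ℝ) (σ : 𝓚 → 𝓕 → ℝ)
    (hσ : ∀ k f, 0 < σ k f) (U : 𝓚 → 𝓕 → ℝ) (V : 𝓚 → 𝓕 → EuclideanSpace ℂ (Fin M))
    (hU : ∀ k f, 0 ≤ U k f) :
    f0 β h w σ U V = fr β h w σ U V (sinr β h σ U V) := by
  unfold f0 fr sinr
  refine Finset.sum_congr rfl fun k _ => Finset.sum_congr rfl fun f _ => ?_
  have hSn := sigPow_nonneg' β h U V hU k f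
  have hIp := intPow_pos' β h σ hσ U V hU k f
  have hid := dual_id' (sigPow β h U V k f) (intPow β h σ U V k f) hSn hIp
  have e : w k * (1 + sigPow β h U V k f / intPow β h σ U V k f) * sigPow β h U V k f /
      (sigPow β h U V k f + intPow β h σ U V k f)
      = w k * ((1 + sigPow β h U V k f / intPow β h σ U V k f) * sigPow β h U V k f /
        (sigPow β h U V k f + intPow β h σ U V k f)) := by ring
  rw [e, hid]
  ring

private lemma fr_le_f0' {M : ℕ} [Fintype 𝓚] [DecidableEq 𝓚] [Fintype 𝓕] (β : 𝓚 → 𝓑)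
    (h : 𝓚 → 𝓑 → 𝓕 → EuclideanSpace ℂ (Fin M)) (w : 𝓚 → ℝ) (σ : 𝓚 → 𝓕 → ℝ)
    (hw : ∀ k, 0 < w k) (hσ : ∀ k f, 0 < σ k f)
    (U : 𝓚 → 𝓕 → ℝ) (V : 𝓚 → 𝓕 → EuclideanSpace ℂ (Fin M)) (Γ : 𝓚 → 𝓕 → ℝ)
    (hU : ∀ k f, 0 ≤ U k f) (hΓ : ∀ k f, -1 < Γ k f) :
    fr β h w σ U V Γ ≤ f0 β h w σ U V := by
  unfold f0 fr sinr
  refine Finset.sum_le_sum fun k _ => Finset.sum_le_sum fun f _ => ?_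
  have hSn := sigPow_nonneg' β h U V hU k f
  have hIp := intPow_pos' β h σ hσ U V hU k f
  have key := mul_le_mul_of_nonneg_left
    (dual_le' (sigPow β h U V k f) (intPow β h σ U V k f) (Γ k f) hSn hIp (hΓ k f))
    (hw k).le
  have e : w k * (Real.log (1 + Γ k f) - Γ k f + (1 + Γ k f) * sigPow β h U V k f /
      (sigPow β h U V k f + intPow β h σ U V k f))
      = w k * Real.log (1 + Γ k f) - w k * Γ k f + w k * (1 + Γ k f) * sigPow β h U V k f /
        (sigPow β h U V k f + intPow β h σ U V k f) := by ring
  rw [e] at key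
  exact key

private lemma fq_le_fr' {M : ℕ} [Fintype 𝓚] [DecidableEq 𝓚] [Fintype 𝓕] (β : 𝓚 → 𝓑)
    (h : 𝓚 → 𝓑 → 𝓕 → EuclideanSpace ℂ (Fin M)) (w : 𝓚 → ℝ) (σ : 𝓚 → 𝓕 → ℝ)
    (hw : ∀ k, 0 < w k) (hσ : ∀ k f, 0 < σ k f)
    (U : 𝓚 → 𝓕 → ℝ) (V : 𝓚 → 𝓕 → EuclideanSpace ℂ (Fin M)) (Γ : 𝓚 → 𝓕 → ℝ)
    (Y : 𝓚 → 𝓕 → ℂ)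
    (hUbin : ∀ k f, U k f = 0 ∨ U k f = 1) (hΓ : ∀ k f, -1 < Γ k f) :
    fq β h w σ U V Γ Y ≤ fr β h w σ U V Γ := by
  have hU : ∀ k f, 0 ≤ U k f := fun k f => by
    rcases hUbin k f with h' | h' <;> rw [h'] <;> norm_num
  unfold fq fr
  refine Finset.sum_le_sum fun k _ => Finset.sum_le_sum fun f _ => ?_
  have hSn := sigPow_nonneg' β h U V hU k f
  have hIp := intPow_pos' β h σ hσ U V hU k f
  have hd : 0 < sigPow β h U V k f + intPow β h σ U V k f := by linarith
  have hwΓ : 0 ≤ w k * (1 + Γ k f) := mul_nonneg (hw k).le (by linarith [hΓ k f])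
  have hq := quad_le' (((Real.sqrt (w k * (1 + Γ k f)) * U k f : ℝ) : ℂ) *
    (inner ℂ (V k f) (h k (β k) f) : ℂ)) (Y k f)
    (sigPow β h U V k f + intPow β h σ U V k f) hd
  have ha := absa' (w k) (Γ k f) (U k f) hwΓ (hUbin k f) (inner ℂ (V k f) (h k (β k) f))
  rw [abs_inner_symm' (V k f) (h k (β k) f)] at ha
  have ha' : ‖(((Real.sqrt (w k * (1 + Γ k f)) * U k f : ℝ) : ℂ) *
      (inner ℂ (V k f) (h k (β k) f) : ℂ))‖ ^ 2 = w k * (1 + Γ k f) * sigPow β h U V k f := by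
    rw [ha]; rfl
  rw [ha'] at hq
  linarith

private lemma exists_Y' {M : ℕ} [Fintype 𝓚] [DecidableEq 𝓚] [Fintype 𝓕] (β : 𝓚 → 𝓑)
    (h : 𝓚 → 𝓑 → 𝓕 → EuclideanSpace ℂ (Fin M)) (w : 𝓚 → ℝ) (σ : 𝓚 → 𝓕 → ℝ)
    (hw : ∀ k, 0 < w k) (hσ : ∀ k f, 0 < σ k f)
    (U : 𝓚 → 𝓕 → ℝ) (V : 𝓚 → 𝓕 → EuclideanSpace ℂ (Fin M)) (Γ : 𝓚 → 𝓕 → ℝ)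
    (hUbin : ∀ k f, U k f = 0 ∨ U k f = 1) (hΓ : ∀ k f, -1 < Γ k f) :
    ∃ Y : 𝓚 → 𝓕 → ℂ, fr β h w σ U V Γ = fq β h w σ U V Γ Y := by
  have hU : ∀ k f, 0 ≤ U k f := fun k f => by
    rcases hUbin k f with h' | h' <;> rw [h'] <;> norm_num
  refine ⟨fun k f => (((Real.sqrt (w k * (1 + Γ k f)) * U k f : ℝ) : ℂ) *
    (inner ℂ (V k f) (h k (β k) f) : ℂ)) /
    ((sigPow β h U V k f + intPow β h σ U V k f : ℝ) : ℂ), ?_⟩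
  unfold fr fq
  refine Finset.sum_congr rfl fun k _ => Finset.sum_congr rfl fun f _ => ?_
  have hSn := sigPow_nonneg' β h U V hU k f
  have hIp := intPow_pos' β h σ hσ U V hU k f
  have hd : 0 < sigPow β h U V k f + intPow β h σ U V k f := by linarith
  have hwΓ : 0 ≤ w k * (1 + Γ k f) := mul_nonneg (hw k).le (by linarith [hΓ k f])
  have hq := quad_eq' (((Real.sqrt (w k * (1 + Γ k f)) * U k f : ℝ) : ℂ) *
    (inner ℂ (V k f) (h k (β k) f) : ℂ)) (sigPow β h U V k f + intPow β h σ U V k f) hd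
  have ha := absa' (w k) (Γ k f) (U k f) hwΓ (hUbin k f) (inner ℂ (V k f) (h k (β k) f))
  rw [abs_inner_symm' (V k f) (h k (β k) f)] at ha
  have ha' : ‖(((Real.sqrt (w k * (1 + Γ k f)) * U k f : ℝ) : ℂ) *
      (inner ℂ (V k f) (h k (β k) f) : ℂ))‖ ^ 2 = w k * (1 + Γ k f) * sigPow β h U V k f := by
    rw [ha]; rfl
  rw [ha'] at hq
  linarith

end Helpers

/-- Theorem 2 of the paper: one iteration of the proposed fractional-programming
algorithm (successive updates of `Γ`, `Y`, `V`, and the joint scheduling/beam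
assignment `(U,V)`) does not decrease the weighted sum rate `f₀`. -/
theorem algorithm_nondecreasing {M : ℕ} [Fintype 𝓚] [DecidableEq 𝓚] [Fintype 𝓕]
    [DecidableEq 𝓑]
    (β : 𝓚 → 𝓑) (h : 𝓚 → 𝓑 → 𝓕 → EuclideanSpace ℂ (Fin M))
    (w : 𝓚 → ℝ) (σ : 𝓚 → 𝓕 → ℝ) (hw : ∀ k, 0 < w k) (hσ : ∀ k f, 0 < σ k f)
    (P_T : ℝ) (hPT : 0 < P_T)
    -- power feasibility predicate
    (PowerFeasible : (𝓚 → 𝓕 → EuclideanSpace ℂ (Fin M)) → Prop)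
    (hPF : ∀ V : 𝓚 → 𝓕 → EuclideanSpace ℂ (Fin M),
      PowerFeasible V ↔ ∀ b : 𝓑,
        (∑ f : 𝓕, ∑ k ∈ Finset.univ.filter (fun k => β k = b), ‖V k f‖ ^ 2) ≤
          (Fintype.card 𝓕 : ℝ) * P_T)
    -- admissibility predicate for scheduling variables
    (Admissible : (𝓚 → 𝓕 → ℝ) → Prop)
    (hAdm : ∀ U : 𝓚 → 𝓕 → ℝ,
      Admissible U ↔ ((∀ k f, U k f = 0 ∨ U k f = 1) ∧
        ∀ b : 𝓑, ∀ f : 𝓕,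
          (∑ k ∈ Finset.univ.filter (fun k => β k = b), U k f) ≤ (M : ℝ)))
    -- iterates
    (U0 U1 : 𝓚 → 𝓕 → ℝ) (V0 V1 Vt1 : 𝓚 → 𝓕 → EuclideanSpace ℂ (Fin M))
    (Γ1 : 𝓚 → 𝓕 → ℝ) (Y1 : 𝓚 → 𝓕 → ℂ)
    -- (i)
    (hU0 : Admissible U0) (hV0 : PowerFeasible V0)
    -- (ii)
    (hΓ1 : ∀ k f, -1 < Γ1 k f)
    (hΓ1max : ∀ Γ : 𝓚 → 𝓕 → ℝ, (∀ k f, -1 < Γ k f) →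
      fr β h w σ U0 V0 Γ ≤ fr β h w σ U0 V0 Γ1)
    -- (iii)
    (hY1max : ∀ Y : 𝓚 → 𝓕 → ℂ,
      fq β h w σ U0 V0 Γ1 Y ≤ fq β h w σ U0 V0 Γ1 Y1)
    -- (iv)
    (hV1 : PowerFeasible V1)
    (hV1max : ∀ V : 𝓚 → 𝓕 → EuclideanSpace ℂ (Fin M), PowerFeasible V →
      fq β h w σ U0 V Γ1 Y1 ≤ fq β h w σ U0 V1 Γ1 Y1)
    -- (v)
    (hU1 : Admissible U1) (hVt1 : PowerFeasible Vt1)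
    (hsched : fq β h w σ U0 V1 Γ1 Y1 ≤ fq β h w σ U1 Vt1 Γ1 Y1) :
    f0 β h w σ U0 V0 ≤ f0 β h w σ U1 Vt1 := by
  obtain ⟨hU0bin, -⟩ := (hAdm U0).mp hU0
  obtain ⟨hU1bin, -⟩ := (hAdm U1).mp hU1
  have hU0nn : ∀ k f, 0 ≤ U0 k f := fun k f => by
    rcases hU0bin k f with h' | h' <;> rw [h'] <;> norm_num
  have e1 := f0_eq_fr' β h w σ hσ U0 V0 hU0nn
  have hγ0 : ∀ k f, -1 < sinr β h σ U0 V0 k f := fun k f =>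
    lt_of_lt_of_le neg_one_lt_zero
      (div_nonneg (sigPow_nonneg' β h U0 V0 hU0nn k f)
        (intPow_pos' β h σ hσ U0 V0 hU0nn k f).le)
  have e2 := hΓ1max (sinr β h σ U0 V0) hγ0
  obtain ⟨Ys, e3⟩ := exists_Y' β h w σ hw hσ U0 V0 Γ1 hU0bin hΓ1
  have e4 := hY1max Ys
  have e5 := hV1max V0 hV0
  have e7 := fq_le_fr' β h w σ hw hσ U1 Vt1 Γ1 Y1 hU1bin hΓ1
  have e8 := fr_le_f0' β h w σ hw hσ U1 Vt1 Γ1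
    (fun k f => by rcases hU1bin k f with h' | h' <;> rw [h'] <;> norm_num) hΓ1
  linarith
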